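/- Let ε, I, D, k₃ be strictly positive real numbers. Then there exists λ₀ > 0 such that for every λ ∈ (0, λ₀) and every y ∈ (−k₃, 0), one has (ε/I)(e^y − 1) − y/D < (1 − e^{λ y})/(λ D). -/

import Mathlib

/-- For strictly positive `ε, I, D, k₃` there exists `λ₀ > 0` such that for every
`λ ∈ (0, λ₀)` and every `y ∈ (-k₃, 0)` one has
`(ε/I)(e^y - 1) - y/D < (1 - e^{λ y})/(λ D)`. -/
theorem stmt4 (ε I D k₃ : ℝ) (hε : 0 < ε) (hI : 0 < I) (hD : 0 < D) (hk : 0 < k₃) :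
    ∃ lam₀ > 0, ∀ lam : ℝ, 0 < lam → lam < lam₀ → ∀ y : ℝ, -k₃ < y → y < 0 →
      (ε / I) * (Real.exp y - 1) - y / D < (1 - Real.exp (lam * y)) / (lam * D) := by
  have hek : Real.exp (-k₃) < 1 := Real.exp_lt_one_iff.mpr (by linarith)
  obtain ⟨c, hcdef⟩ : ∃ c : ℝ, c = (1 - Real.exp (-k₃)) / k₃ := ⟨_, rfl⟩
  have hc : 0 < c := hcdef ▸ div_pos (by linarith) hk
  refine ⟨min (c * ε * D / (I * k₃)) k₃⁻¹, lt_min (by positivity) (by positivity), ?_⟩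
  intro lam hl hll y hy1 hy2
  have hlam1 : lam < c * ε * D / (I * k₃) := lt_of_lt_of_le hll (min_le_left _ _)
  have hlam2 : lam * k₃ < 1 := by
    have h := lt_of_lt_of_le hll (min_le_right _ _)
    calc lam * k₃ < k₃⁻¹ * k₃ := by apply mul_lt_mul_of_pos_right h hk
    _ = 1 := inv_mul_cancel₀ hk.ne'
  -- chord bound: exp y - 1 ≤ c * y on [-k₃, 0]
  have hE1 : Real.exp y - 1 ≤ c * y := by
    have chord := convexOn_exp.2 (Set.mem_univ (-k₃)) (Set.mem_univ (0:ℝ))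
      (show (0:ℝ) ≤ -y / k₃ from div_nonneg (by linarith) hk.le)
      (show (0:ℝ) ≤ (k₃ + y) / k₃ from div_nonneg (by linarith) hk.le)
      (show -y / k₃ + (k₃ + y) / k₃ = 1 by field_simp; ring)
    simp only [smul_eq_mul, mul_zero, add_zero, Real.exp_zero, mul_one] at chord
    have h0 : -y / k₃ * -k₃ = y := by field_simp
    rw [h0] at chord
    have h1 : -y / k₃ * Real.exp (-k₃) + (k₃ + y) / k₃ - 1 = c * y := by
      rw [hcdef]; field_simp; ring
    linarith
  obtain ⟨A, hAdef⟩ : ∃ A : ℝ, A = Real.exp (lam * y) - 1 - lam * y := ⟨_, rfl⟩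
  have hA0 : 0 ≤ A := by rw [hAdef]; linarith [Real.add_one_le_exp (lam * y)]
  have hA2 : A ≤ (lam * y) ^ 2 := by
    have habs : |lam * y| ≤ 1 := by
      rw [abs_of_nonpos (by nlinarith)]
      nlinarith
    have h := Real.abs_exp_sub_one_sub_id_le habs
    calc A ≤ |A| := le_abs_self A
    _ ≤ (lam * y) ^ 2 := by rw [hAdef]; exact h
  have hid : (1 - Real.exp (lam * y)) / (lam * D) = -y / D - A / (lam * D) := by
    rw [hAdef]; field_simp; ring
  rw [hid, neg_div]
  have step1 : A / (lam * D) ≤ (lam * y) ^ 2 / (lam * D) := by gcongr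
  have step2 : (lam * y) ^ 2 / (lam * D) = lam * y ^ 2 / D := by
    field_simp
  have step3 : (ε / I) * (Real.exp y - 1) ≤ (ε / I) * (c * y) :=
    mul_le_mul_of_nonneg_left hE1 (le_of_lt (div_pos hε hI))
  have hlam1' : lam * (I * k₃) < c * ε * D := (lt_div_iff₀ (by positivity)).mp hlam1
  have h5 : lam * (I * k₃) * (-y) < c * ε * D * (-y) :=
    mul_lt_mul_of_pos_right hlam1' (by linarith)
  have h6 : lam * I * -y * -y ≤ lam * I * -y * k₃ :=
    mul_le_mul_of_nonneg_left (by linarith)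
      (mul_nonneg (mul_nonneg hl.le hI.le) (by linarith))
  have keymul : ε * (c * y) * D + lam * y ^ 2 * I < 0 := by nlinarith
  have key : ε / I * (c * y) < -(lam * y ^ 2 / D) := by
    rw [div_mul_eq_mul_div, div_lt_iff₀ hI,
      show -(lam * y ^ 2 / D) * I = -(lam * y ^ 2 * I) / D by ring, lt_div_iff₀ hD]
    linarith
  have step4 : A / (lam * D) ≤ lam * y ^ 2 / D := by linarith
  linarith
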